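/- If the restricted weak type inequality $\|\mathcal{M}(\vec{f})\|_{L^{p,\infty}(\nu)} \leq C\prod_{i=1}^m \|f_i\|_{L^{p_i,1}(w_i)}$ holds for all $\vec{f}$, then for every cube $Q$, $(\fint_Q \nu)^{1/p} \leq p_1\cdots p_m C \prod_{i=1}^m(\fint_Q w_i)^{1/p_i}$; consequently $\nu \lesssim \prod_{i=1}^m w_i^{p/p_i}$ almost everywhere. -/

import Mathlib

open MeasureTheory Set ENNReal NNReal

noncomputable section

abbrev Rn (n : ℕ) := EuclideanSpace ℝ (Fin n)

variable {n : ℕ}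

/-- The closed cube with lower-left corner `x` and side length `r`. -/
def cubeSet (x : Rn n) (r : ℝ) : Set (Rn n) := {y : Rn n | ∀ i, x i ≤ y i ∧ y i ≤ x i + r}

def IsCube (Q : Set (Rn n)) : Prop := ∃ (x : Rn n) (r : ℝ), 0 < r ∧ Q = cubeSet x r

/-- `w(E) = ∫_E w`. -/
def wInt (w : Rn n → ℝ≥0∞) (E : Set (Rn n)) : ℝ≥0∞ := ∫⁻ x in E, w x

/-- A weight: a measurable, positive, finite, locally integrable function. -/
def IsWeight (w : Rn n → ℝ≥0∞) : Prop :=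
  Measurable w ∧ (∀ x, 0 < w x ∧ w x ≠ ∞) ∧ ∀ Q : Set (Rn n), IsCube Q → wInt w Q ≠ ∞

/-- Average of `w` over `Q`. -/
def avgw (w : Rn n → ℝ≥0∞) (Q : Set (Rn n)) : ℝ≥0∞ := wInt w Q / volume Q

def A1Const (w : Rn n → ℝ≥0∞) : ℝ≥0∞ :=
  ⨆ (Q : Set (Rn n)) (_ : IsCube Q), avgw w Q * (essInf w (volume.restrict Q))⁻¹

def ApConst (p : ℝ) (w : Rn n → ℝ≥0∞) : ℝ≥0∞ :=
  ⨆ (Q : Set (Rn n)) (_ : IsCube Q),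
    avgw w Q * (avgw (fun x => w x ^ (1 - p / (p - 1))) Q) ^ (p - 1)

def MemAp (p : ℝ) (w : Rn n → ℝ≥0∞) : Prop :=
  if p = 1 then A1Const w ≠ ∞ else ApConst p w ≠ ∞

def MemAinf (w : Rn n → ℝ≥0∞) : Prop := ∃ p : ℝ, 1 ≤ p ∧ MemAp p w

def RHinfConst (w : Rn n → ℝ≥0∞) : ℝ≥0∞ :=
  ⨆ (Q : Set (Rn n)) (_ : IsCube Q), (volume Q / wInt w Q) * essSup w (volume.restrict Q)

/-- Weak `L^p` quasinorm with respect to a measure `μ`. -/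
def wkNorm {α : Type*} [MeasurableSpace α] (f : α → ℝ≥0∞) (p : ℝ) (μ : Measure α) : ℝ≥0∞ :=
  ⨆ y : ℝ≥0, (y : ℝ≥0∞) * (μ {x | (y : ℝ≥0∞) < f x}) ^ (1 / p)

/-- The measure `w(x) dx`. -/
def wMeasure (w : Rn n → ℝ≥0∞) : Measure (Rn n) := volume.withDensity w

/-- Weak `L^{p,∞}(w)` quasinorm. -/
def wkNormW (f : Rn n → ℝ≥0∞) (p : ℝ) (w : Rn n → ℝ≥0∞) : ℝ≥0∞ := wkNorm f p (wMeasure w)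

/-- Lorentz `L^{p,1}(w)` norm: `p ∫_0^∞ w({|f| > y})^{1/p} dy`. -/
def lorNorm (f : Rn n → ℝ≥0∞) (p : ℝ) (w : Rn n → ℝ≥0∞) : ℝ≥0∞ :=
  ENNReal.ofReal p * ∫⁻ y in Ioi (0 : ℝ), (wMeasure w {x | ENNReal.ofReal y < f x}) ^ (1 / p)

/-- The Hardy–Littlewood maximal operator over cubes. -/
def HLM (f : Rn n → ℝ≥0∞) (x : Rn n) : ℝ≥0∞ :=
  ⨆ (Q : Set (Rn n)) (_ : IsCube Q) (_ : x ∈ Q), (∫⁻ y in Q, f y) / volume Q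

/-- `‖w‖_{A_p^R}`. -/
def AprNorm (p : ℝ) (w : Rn n → ℝ≥0∞) : ℝ≥0∞ :=
  ⨆ (Q : Set (Rn n)) (_ : IsCube Q) (E : Set (Rn n)) (_ : MeasurableSet E) (_ : E ⊆ Q)
    (_ : 0 < wInt w E), (volume E / volume Q) * (wInt w Q / wInt w E) ^ (1 / p)

def MemApr (p : ℝ) (w : Rn n → ℝ≥0∞) : Prop := AprNorm p w ≠ ∞

/-- `L^{p',∞}(w)` norm, interpreted as `L^∞(w)` when `p = 1`. -/
def dualWkNorm (p : ℝ) (g : Rn n → ℝ≥0∞) (w : Rn n → ℝ≥0∞) : ℝ≥0∞ :=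
  if p = 1 then essSup g (wMeasure w) else wkNormW g (p / (p - 1)) w

/-- `[w]_{A_p^R}`. -/
def AprConst (p : ℝ) (w : Rn n → ℝ≥0∞) : ℝ≥0∞ :=
  ⨆ (Q : Set (Rn n)) (_ : IsCube Q),
    wInt w Q ^ (1 / p) * dualWkNorm p (Q.indicator fun x => (w x)⁻¹) w / volume Q

/-- The multi(sub)linear maximal operator `𝓜`. -/
def curlyM {m : ℕ} (f : Fin m → Rn n → ℝ≥0∞) (x : Rn n) : ℝ≥0∞ :=
  ⨆ (Q : Set (Rn n)) (_ : IsCube Q) (_ : x ∈ Q), ∏ i, (∫⁻ y in Q, f i y) / volume Q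


section Aux

open Metric Filter

variable {n : ℕ}

lemma cubeSet_eq_preimage (x : Rn n) (r : ℝ) :
    cubeSet x r
      = (MeasurableEquiv.toLp 2 (Fin n → ℝ)).symm ⁻¹' (Set.univ.pi fun i => Icc (x i) (x i + r)) := by
  ext y; simp [cubeSet, MeasurableEquiv.coe_toLp_symm, Set.mem_pi, Icc]

lemma volume_cubeSet (x : Rn n) {r : ℝ} (hr : 0 ≤ r) :
    volume (cubeSet x r) = ENNReal.ofReal r ^ n := by
  rw [cubeSet_eq_preimage,
    (EuclideanSpace.volume_preserving_symm_measurableEquiv_toLp (Fin n)).measure_preimage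
      ((MeasurableSet.univ_pi fun i => measurableSet_Icc).nullMeasurableSet)]
  rw [volume_pi_pi]
  simp [Real.volume_Icc, hr]

lemma measurableSet_cubeSet (x : Rn n) (r : ℝ) : MeasurableSet (cubeSet x r) := by
  rw [cubeSet_eq_preimage]
  exact (MeasurableSet.univ_pi fun i => measurableSet_Icc).preimage (MeasurableEquiv.measurable _)

lemma IsCube.measurableSet' {Q : Set (Rn n)} (hQ : IsCube Q) : MeasurableSet Q := by
  obtain ⟨x, r, _, rfl⟩ := hQ; exact measurableSet_cubeSet x r

lemma IsCube.volume_ne_zero {Q : Set (Rn n)} (hQ : IsCube Q) : volume Q ≠ 0 := by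
  obtain ⟨x, r, hr, rfl⟩ := hQ
  rw [volume_cubeSet x hr.le]
  exact pow_ne_zero _ (by simpa using hr)

lemma IsCube.volume_ne_top {Q : Set (Rn n)} (hQ : IsCube Q) : volume Q ≠ ∞ := by
  obtain ⟨x, r, _hr, rfl⟩ := hQ
  rw [volume_cubeSet x _hr.le]
  exact ENNReal.pow_ne_top ENNReal.ofReal_ne_top

lemma continuous_coord (i : Fin n) : Continuous (fun y : Rn n => y i) :=
  (continuous_apply i).comp (PiLp.continuous_ofLp 2 (fun _ : Fin n => ℝ))

lemma isClosed_cubeSet (x : Rn n) (r : ℝ) : IsClosed (cubeSet x r) := by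
  have : cubeSet x r = ⋂ i, ((fun y : Rn n => y i) ⁻¹' Icc (x i) (x i + r)) := by
    ext y; simp [cubeSet, mem_Icc, forall_and]
  rw [this]
  exact isClosed_iInter fun i => (isClosed_Icc).preimage (continuous_coord i)

lemma interior_cubeSet_nonempty (x : Rn n) {r : ℝ} (hr : 0 < r) :
    (interior (cubeSet x r)).Nonempty := by
  have hopen : IsOpen {y : Rn n | ∀ i, x i < y i ∧ y i < x i + r} := by
    have : {y : Rn n | ∀ i, x i < y i ∧ y i < x i + r}
        = ⋂ i, ((fun y : Rn n => y i) ⁻¹' Ioo (x i) (x i + r)) := by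
      ext y; simp [mem_Ioo, forall_and]
    rw [this]
    exact isOpen_iInter_of_finite fun i => (isOpen_Ioo).preimage (continuous_coord i)
  have hsub : {y : Rn n | ∀ i, x i < y i ∧ y i < x i + r} ⊆ cubeSet x r :=
    fun y hy i => ⟨(hy i).1.le, (hy i).2.le⟩
  have hmem : (WithLp.toLp 2 (fun i => x i + r/2) : Rn n) ∈ {y : Rn n | ∀ i, x i < y i ∧ y i < x i + r} := by
    intro i; constructor <;> simp <;> linarith
  exact ⟨_, (hopen.subset_interior_iff.mpr hsub) hmem⟩

/-- The cube centered at `x` with half-side `s`. -/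
def ctrCube (x : Rn n) (s : ℝ) : Set (Rn n) := cubeSet (WithLp.toLp 2 (fun i => x i - s) : Rn n) (2 * s)

lemma isCube_ctrCube (x : Rn n) {s : ℝ} (hs : 0 < s) : IsCube (ctrCube x s) :=
  ⟨_, 2 * s, by linarith, rfl⟩

lemma ctrCube_subset_closedBall (x : Rn n) {s : ℝ} (hs : 0 ≤ s) :
    ctrCube x s ⊆ closedBall x (s * Real.sqrt n) := by
  intro y hy
  simp only [mem_closedBall]
  have hd : dist y x = Real.sqrt (∑ i, dist (y i) (x i) ^ 2) := EuclideanSpace.dist_eq y x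
  rw [hd]
  have h1 : ∑ i, dist (y i) (x i) ^ 2 ≤ (n : ℝ) * s ^ 2 := by
    have : ∀ i : Fin n, dist (y i) (x i) ^ 2 ≤ s ^ 2 := by
      intro i
      have h := hy i
      simp only [WithLp.ofLp_toLp] at h
      have habs : |y i - x i| ≤ s := by
        rw [abs_le]; constructor <;> [linarith [h.1]; linarith [h.2]]
      calc dist (y i) (x i) ^ 2 = |y i - x i| ^ 2 := by rw [Real.dist_eq, sq_abs]
        _ ≤ s ^ 2 := by nlinarith [abs_nonneg (y i - x i)]
    calc ∑ i, dist (y i) (x i) ^ 2 ≤ ∑ _i : Fin n, s ^ 2 := Finset.sum_le_sum fun i _ => this i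
      _ = (n : ℝ) * s ^ 2 := by simp [Finset.sum_const, mul_comm]
  calc Real.sqrt (∑ i, dist (y i) (x i) ^ 2) ≤ Real.sqrt ((n : ℝ) * s ^ 2) := Real.sqrt_le_sqrt h1
    _ = s * Real.sqrt n := by
        rw [Real.sqrt_mul (Nat.cast_nonneg n), Real.sqrt_sq hs, mul_comm]

lemma closedBall_subset_ctrCube (x : Rn n) {R : ℝ} (hR : 0 ≤ R) :
    closedBall x R ⊆ ctrCube x R := by
  intro y hy
  simp only [mem_closedBall] at hy
  intro i
  have h1 : |y i - x i| ≤ dist y x := by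
    have : dist (y i) (x i) ^ 2 ≤ ∑ j, dist (y j) (x j) ^ 2 :=
      Finset.single_le_sum (f := fun j => dist (y j) (x j) ^ 2) (fun j _ => sq_nonneg _)
        (Finset.mem_univ i)
    have h2 := Real.sqrt_le_sqrt this
    rw [Real.sqrt_sq_eq_abs] at h2
    rw [EuclideanSpace.dist_eq]
    calc |y i - x i| = |dist (y i) (x i)| := by rw [Real.dist_eq, abs_abs]
      _ ≤ _ := h2
  rw [abs_le] at h1
  constructor
  · simp only [WithLp.ofLp_toLp]; linarith [h1.1, hy]
  · simp only [WithLp.ofLp_toLp]; linarith [h1.2, hy]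

def Kconst (n : ℕ) : ℝ≥0 := Real.toNNReal ((3 * Real.sqrt n) ^ n)

lemma Kcoe : ((Kconst n : ℝ≥0) : ℝ≥0∞) = ENNReal.ofReal ((3 * Real.sqrt n) ^ n) := rfl

lemma three_pow_le : (3 : ℝ) ^ n ≤ (3 * Real.sqrt n) ^ n := by
  rcases Nat.eq_zero_or_pos n with h | h
  · simp [h]
  · apply pow_le_pow_left₀ (by norm_num)
    nlinarith [Real.one_le_sqrt.mpr (by exact_mod_cast h : (1:ℝ) ≤ n), Real.sqrt_nonneg (n:ℝ)]

lemma hdoub : ∀ x : Rn n, ∃ᶠ r in nhdsWithin 0 (Ioi 0),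
    volume (closedBall x (3 * r)) ≤ (Kconst n) * volume (closedBall x r) := by
  intro x
  apply Eventually.frequently
  filter_upwards [self_mem_nhdsWithin] with r (hr : r ∈ Ioi (0:ℝ))
  have h3 : (0:ℝ) ≤ 3 := by norm_num
  rw [Measure.addHaar_closedBall_mul volume x h3 (le_of_lt hr)]
  have hc : volume (closedBall x r) = volume (closedBall (0 : Rn n) r) :=
    Measure.addHaar_closedBall_center volume x r
  rw [hc]
  apply mul_le_mul_left
  rw [Kcoe, finrank_euclideanSpace_fin]
  exact ENNReal.ofReal_le_ofReal three_pow_le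

/-- The Vitali family adapted to cubes. -/
def vfam (n : ℕ) : VitaliFamily (volume : Measure (Rn n)) :=
  Vitali.vitaliFamily volume (Kconst n) hdoub

lemma ctrCube_mem_setsAt (x : Rn n) {s : ℝ} (hs : 0 < s) :
    ctrCube x s ∈ (vfam n).setsAt x := by
  show IsClosed _ ∧ (interior _).Nonempty ∧
    ∃ r, ctrCube x s ⊆ closedBall x r ∧
      volume (closedBall x (3 * r)) ≤ (Kconst n) * volume (ctrCube x s)
  refine ⟨isClosed_cubeSet _ _, interior_cubeSet_nonempty _ (by linarith), s * Real.sqrt n,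
    ctrCube_subset_closedBall x hs.le, ?_⟩
  have h1 : closedBall x (3 * (s * Real.sqrt n)) ⊆ ctrCube x (3 * (s * Real.sqrt n)) :=
    closedBall_subset_ctrCube x (by positivity)
  refine le_trans (measure_mono h1) ?_
  have h2 : volume (ctrCube x (3 * (s * Real.sqrt n)))
      = ENNReal.ofReal (2 * (3 * (s * Real.sqrt n))) ^ n := volume_cubeSet _ (by positivity)
  have h3 : volume (ctrCube x s) = ENNReal.ofReal (2 * s) ^ n := volume_cubeSet _ (by positivity)
  rw [h2, h3, Kcoe]
  have : (2 * (3 * (s * Real.sqrt n)) : ℝ) = (3 * Real.sqrt n) * (2 * s) := by ring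
  rw [this, ENNReal.ofReal_mul (by positivity), mul_pow, ← ENNReal.ofReal_pow (by positivity)]

lemma tendsto_ctrCube (x : Rn n) :
    Tendsto (fun k : ℕ => ctrCube x (1 / (k + 1 : ℝ))) atTop ((vfam n).filterAt x) := by
  rw [VitaliFamily.tendsto_filterAt_iff]
  constructor
  · exact Eventually.of_forall fun k => ctrCube_mem_setsAt x (by positivity)
  · intro ε hε
    have ht : Tendsto (fun k : ℕ => (1 / (k + 1 : ℝ)) * Real.sqrt n) atTop (nhds 0) := by
      simpa using tendsto_one_div_add_atTop_nhds_zero_nat.mul_const (Real.sqrt n)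
    filter_upwards [ht.eventually (gt_mem_nhds hε)] with k hk
    exact subset_trans (ctrCube_subset_closedBall x (by positivity))
      (closedBall_subset_closedBall hk.le)

lemma locallyFinite_withDensity {w : Rn n → ℝ≥0∞} (hw : IsWeight w) :
    IsLocallyFiniteMeasure (volume.withDensity w) := by
  constructor
  intro x
  have hcube : IsCube (ctrCube x 1) := isCube_ctrCube x one_pos
  refine ⟨ctrCube x 1, ?_, ?_⟩
  · rw [_root_.mem_nhds_iff]
    refine ⟨{y : Rn n | ∀ i, x i - 1 < y i ∧ y i < x i + 1}, ?_, ?_, ?_⟩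
    · intro y hy i
      have h := hy i
      constructor
      · show x i - 1 ≤ y i; linarith [h.1]
      · show y i ≤ x i - 1 + 2 * 1; linarith [h.2]
    · have : {y : Rn n | ∀ i, x i - 1 < y i ∧ y i < x i + 1}
          = ⋂ i, ((fun y : Rn n => y i) ⁻¹' Ioo (x i - 1) (x i + 1)) := by
        ext y; simp [mem_Ioo, forall_and]
      rw [this]
      exact isOpen_iInter_of_finite fun i => (isOpen_Ioo).preimage (continuous_coord i)
    · intro i
      constructor
      · show x i - 1 < x i; linarith
      · show x i < x i + 1; linarith
  · rw [withDensity_apply _ hcube.measurableSet']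
    exact lt_of_le_of_ne le_top (hw.2.2 _ hcube)

lemma diff_weight {w : Rn n → ℝ≥0∞} (hw : IsWeight w) :
    ∀ᵐ x ∂(volume : Measure (Rn n)),
      Tendsto (fun k : ℕ => avgw w (ctrCube x (1 / (k + 1 : ℝ)))) atTop (nhds (w x)) := by
  haveI := locallyFinite_withDensity hw
  filter_upwards [(vfam n).ae_tendsto_rnDeriv (volume.withDensity w),
    Measure.rnDeriv_withDensity volume hw.1] with x hx hrn
  rw [hrn] at hx
  have hcomp := hx.comp (tendsto_ctrCube x)
  have heq : (fun k : ℕ => ((volume.withDensity w) (ctrCube x (1 / (k + 1 : ℝ))))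
        / volume (ctrCube x (1 / (k + 1 : ℝ))))
      = fun k : ℕ => avgw w (ctrCube x (1 / (k + 1 : ℝ))) := by
    funext k
    rw [avgw, wInt, withDensity_apply _ (isCube_ctrCube x (by positivity)).measurableSet']
  rwa [← heq]

lemma rpow_sum_aux {ι : Type*} (s : Finset ι) (c : ℝ≥0∞) (hc0 : c ≠ 0) (hct : c ≠ ⊤)
    (f : ι → ℝ) : c ^ (∑ i ∈ s, f i) = ∏ i ∈ s, c ^ f i := by
  classical
  induction s using Finset.induction_on with
  | empty => simp
  | insert _ _ h ih =>
    rw [Finset.sum_insert h, Finset.prod_insert h, ENNReal.rpow_add _ _ hc0 hct, ih]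

lemma prod_div_aux {ι : Type*} (s : Finset ι) (a : ι → ℝ≥0∞) (b : ι → ℝ≥0∞)
    (hb0 : ∀ i, b i ≠ 0) (hbt : ∀ i, b i ≠ ⊤) :
    ∏ i ∈ s, (a i / b i) = (∏ i ∈ s, a i) / ∏ i ∈ s, b i := by
  simp only [div_eq_mul_inv, Finset.prod_mul_distrib]
  rw [ENNReal.prod_inv_distrib]
  intro i _ j _ _
  exact Or.inl (hb0 i)

lemma tendsto_prod_aux {m : ℕ} (f : Fin m → ℕ → ℝ≥0∞) (c : Fin m → ℝ≥0∞)
    (hc0 : ∀ i, c i ≠ 0) (hct : ∀ i, c i ≠ ⊤)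
    (h : ∀ i, Tendsto (f i) atTop (nhds (c i))) :
    Tendsto (fun k => ∏ i, f i k) atTop (nhds (∏ i, c i)) := by
  classical
  have H : ∀ s : Finset (Fin m),
      Tendsto (fun k => ∏ i ∈ s, f i k) atTop (nhds (∏ i ∈ s, c i)) := by
    intro s
    induction s using Finset.induction_on with
    | empty => simpa using tendsto_const_nhds
    | insert _ _ hnot ih =>
      simp only [Finset.prod_insert hnot]
      exact ENNReal.Tendsto.mul (h _) (Or.inl (hc0 _)) ih
        (Or.inr (hct _))
  exact H Finset.univ

/-- Testing the restricted weak type inequality on indicators of a cube. -/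
lemma key1 {m : ℕ} (pp : Fin m → ℝ) (hpp : ∀ i, 1 ≤ pp i)
    (p : ℝ) (hp0 : 0 < p)
    (w : Fin m → Rn n → ℝ≥0∞) (ν : Rn n → ℝ≥0∞) (C : ℝ≥0)
    (hC : ∀ f : Fin m → Rn n → ℝ≥0∞, (∀ i, Measurable (f i)) →
      wkNormW (curlyM f) p ν ≤ C * ∏ i, lorNorm (f i) (pp i) (w i))
    (Q : Set (Rn n)) (hQ : IsCube Q) :
    (wInt ν Q) ^ (1 / p) ≤
      ENNReal.ofReal (∏ i, pp i) * C * ∏ i, (wInt (w i) Q) ^ (1 / pp i) := by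
  classical
  set f : Fin m → Rn n → ℝ≥0∞ := fun _ => Q.indicator (fun _ => 1) with hf
  have hfm : ∀ i, Measurable (f i) := fun i => (measurable_const).indicator hQ.measurableSet'
  have hint : ∀ i, (∫⁻ y in Q, f i y) = volume Q := by
    intro i
    rw [hf]
    calc (∫⁻ y in Q, Q.indicator (fun _ => (1:ℝ≥0∞)) y)
        = ∫⁻ y in Q, 1 := setLIntegral_congr_fun hQ.measurableSet'
          (fun y hy => Set.indicator_of_mem hy _)
      _ = volume Q := by simp
  have hcur : ∀ x ∈ Q, (1 : ℝ≥0∞) ≤ curlyM f x := by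
    intro x hx
    have h1 : (1 : ℝ≥0∞) = ∏ _i : Fin m, (∫⁻ y in Q, f _i y) / volume Q := by
      rw [Finset.prod_congr rfl (fun i _ => by rw [hint i])]
      simp [ENNReal.div_self hQ.volume_ne_zero hQ.volume_ne_top]
    rw [h1]
    exact le_iSup_of_le Q (le_iSup_of_le hQ (le_iSup_of_le hx le_rfl))
  have hlhs : (wInt ν Q) ^ (1 / p) ≤ wkNormW (curlyM f) p ν := by
    apply ENNReal.le_of_forall_lt_one_mul_le
    intro a ha
    lift a to ℝ≥0 using ha.ne_top with y
    have hsub : Q ⊆ {x | (y : ℝ≥0∞) < curlyM f x} :=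
      fun x hx => lt_of_lt_of_le (by exact_mod_cast ha) (hcur x hx)
    have hQmeas : wMeasure ν Q = wInt ν Q := withDensity_apply ν hQ.measurableSet'
    calc (y : ℝ≥0∞) * (wInt ν Q) ^ (1/p)
        ≤ (y : ℝ≥0∞) * (wMeasure ν {x | (y : ℝ≥0∞) < curlyM f x}) ^ (1/p) := by
          gcongr
          rw [← hQmeas]; exact measure_mono hsub
      _ ≤ wkNormW (curlyM f) p ν := le_iSup
          (fun y : ℝ≥0 => (y : ℝ≥0∞) * (wMeasure ν {x | (y:ℝ≥0∞) < curlyM f x}) ^ (1/p)) y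
  have hlor : ∀ i, lorNorm (f i) (pp i) (w i)
      = ENNReal.ofReal (pp i) * (wInt (w i) Q) ^ (1 / pp i) := by
    intro i
    have hppos : (0:ℝ) < pp i := lt_of_lt_of_le one_pos (hpp i)
    have hset : ∀ y : ℝ, 0 < y →
        {x | ENNReal.ofReal y < f i x} = if y < 1 then Q else (∅ : Set (Rn n)) := by
      intro y hy
      ext x
      by_cases hx : x ∈ Q
      · have hfx : f i x = 1 := Set.indicator_of_mem hx _
        simp only [Set.mem_setOf_eq, hfx, ENNReal.ofReal_lt_one]
        split_ifs with h1 <;> simp [hx, h1]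
      · have hfx : f i x = 0 := Set.indicator_of_notMem hx _
        simp only [Set.mem_setOf_eq, hfx]
        split_ifs with h1 <;> simp [hx, not_lt_zero']
    have hW : wMeasure (w i) Q = wInt (w i) Q := withDensity_apply (w i) hQ.measurableSet'
    have hcong : ∀ y ∈ Ioi (0:ℝ),
        (wMeasure (w i) {x | ENNReal.ofReal y < f i x}) ^ (1 / pp i)
          = (Ioo (0:ℝ) 1).indicator (fun _ => (wInt (w i) Q) ^ (1 / pp i)) y := by
      intro y hy
      rw [hset y hy]
      by_cases h1 : y < 1
      · rw [if_pos h1, Set.indicator_of_mem (show y ∈ Ioo (0:ℝ) 1 from ⟨hy, h1⟩), hW]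
      · rw [if_neg h1, Set.indicator_of_notMem (fun hmem => h1 hmem.2)]
        simp only [measure_empty]
        exact ENNReal.zero_rpow_of_pos (one_div_pos.mpr hppos)
    rw [lorNorm, setLIntegral_congr_fun measurableSet_Ioi hcong,
      lintegral_indicator measurableSet_Ioo, Measure.restrict_restrict measurableSet_Ioo,
      Set.inter_eq_left.mpr (fun y hy => hy.1), setLIntegral_const]
    rw [Real.volume_Ioo]
    simp
  calc (wInt ν Q) ^ (1 / p) ≤ wkNormW (curlyM f) p ν := hlhs
    _ ≤ C * ∏ i, lorNorm (f i) (pp i) (w i) := hC f hfm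
    _ = C * ∏ i, (ENNReal.ofReal (pp i) * (wInt (w i) Q) ^ (1 / pp i)) := by
        rw [Finset.prod_congr rfl fun i _ => hlor i]
    _ = ENNReal.ofReal (∏ i, pp i) * C * ∏ i, (wInt (w i) Q) ^ (1 / pp i) := by
        rw [Finset.prod_mul_distrib, ENNReal.ofReal_prod_of_nonneg
          (fun i _ => le_trans zero_le_one (hpp i))]
        ring

/-- The averaged version of `key1`. -/
lemma part1 {m : ℕ} (pp : Fin m → ℝ) (hpp : ∀ i, 1 ≤ pp i)
    (p : ℝ) (hp : p⁻¹ = ∑ i, (pp i)⁻¹) (hp0 : 0 < p)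
    (w : Fin m → Rn n → ℝ≥0∞) (ν : Rn n → ℝ≥0∞) (C : ℝ≥0)
    (hkey : ∀ Q : Set (Rn n), IsCube Q → (wInt ν Q) ^ (1/p) ≤
      ENNReal.ofReal (∏ i, pp i) * C * ∏ i, (wInt (w i) Q) ^ (1/pp i))
    (Q : Set (Rn n)) (hQ : IsCube Q) :
    avgw ν Q ^ (1/p) ≤ ENNReal.ofReal (∏ i, pp i) * C * ∏ i, avgw (w i) Q ^ (1/pp i) := by
  have hppos : ∀ i, (0:ℝ) < pp i := fun i => lt_of_lt_of_le one_pos (hpp i)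
  set V := volume Q with hV
  have hV0 : V ≠ 0 := hQ.volume_ne_zero
  have hVt : V ≠ ⊤ := hQ.volume_ne_top
  have hrs : V ^ (1/p) = ∏ i, V ^ (1/pp i) := by
    rw [one_div, hp, rpow_sum_aux Finset.univ V hV0 hVt]
    exact Finset.prod_congr rfl fun i _ => by rw [one_div]
  have hb0 : ∀ i : Fin m, V ^ (1/pp i) ≠ 0 :=
    fun i => (ENNReal.rpow_pos (zero_lt_iff.mpr hV0) hVt).ne'
  have hbt : ∀ i : Fin m, V ^ (1/pp i) ≠ ⊤ :=
    fun i => ENNReal.rpow_ne_top_of_nonneg (one_div_nonneg.mpr (hppos i).le) hVt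
  calc avgw ν Q ^ (1/p) = wInt ν Q ^ (1/p) / V ^ (1/p) := by
        rw [avgw, ENNReal.div_rpow_of_nonneg _ _ (one_div_nonneg.mpr hp0.le)]
    _ ≤ (ENNReal.ofReal (∏ i, pp i) * C * ∏ i, wInt (w i) Q ^ (1/pp i)) / V ^ (1/p) := by
        gcongr
        exact hkey Q hQ
    _ = ENNReal.ofReal (∏ i, pp i) * C * ∏ i, avgw (w i) Q ^ (1/pp i) := by
        have h1 : ∀ i : Fin m, avgw (w i) Q ^ (1/pp i)
            = wInt (w i) Q ^ (1/pp i) / V ^ (1/pp i) := fun i => by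
          rw [avgw, ENNReal.div_rpow_of_nonneg _ _ (one_div_nonneg.mpr (hppos i).le)]
        rw [mul_div_assoc, Finset.prod_congr rfl fun i _ => h1 i,
          prod_div_aux Finset.univ _ _ hb0 hbt, ← hrs]

end Aux

/-- Necessary condition from the restricted weak type bound of `𝓜`:
`(⨍_Q ν)^{1/p} ≤ p_1⋯p_m C ∏ (⨍_Q w_i)^{1/p_i}`, whence `ν ≲ ∏ w_i^{p/p_i}` a.e. -/
theorem stmt16 {n : ℕ} (m : ℕ) (hm : 1 ≤ m) (pp : Fin m → ℝ) (hpp : ∀ i, 1 ≤ pp i)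
    (p : ℝ) (hp : p⁻¹ = ∑ i, (pp i)⁻¹)
    (w : Fin m → Rn n → ℝ≥0∞) (hw : ∀ i, IsWeight (w i))
    (ν : Rn n → ℝ≥0∞) (hν : IsWeight ν) (C : ℝ≥0)
    (hC : ∀ f : Fin m → Rn n → ℝ≥0∞, (∀ i, Measurable (f i)) →
      wkNormW (curlyM f) p ν ≤ C * ∏ i, lorNorm (f i) (pp i) (w i)) :
    (∀ Q : Set (Rn n), IsCube Q →
      avgw ν Q ^ (1 / p) ≤
        ENNReal.ofReal (∏ i, pp i) * C * ∏ i, avgw (w i) Q ^ (1 / pp i)) ∧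
    ∃ C' : ℝ≥0, ∀ᵐ x ∂(volume : Measure (Rn n)),
      ν x ≤ C' * ∏ i, w i x ^ (p / pp i) := by
  have hppos : ∀ i, (0:ℝ) < pp i := fun i => lt_of_lt_of_le one_pos (hpp i)
  haveI : Nonempty (Fin m) := Fin.pos_iff_nonempty.mp hm
  have hpinv : 0 < p⁻¹ := by
    rw [hp]
    exact Finset.sum_pos (fun i _ => inv_pos.mpr (hppos i)) Finset.univ_nonempty
  have hp0 : 0 < p := inv_pos.mp hpinv
  have hkey := fun (Q : Set (Rn n)) (hQ : IsCube Q) => key1 pp hpp p hp0 w ν C hC Q hQ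
  have hpart1 := fun (Q : Set (Rn n)) (hQ : IsCube Q) =>
    part1 pp hpp p hp hp0 w ν C hkey Q hQ
  refine ⟨hpart1, ?_⟩
  set K0 : ℝ≥0∞ := ENNReal.ofReal (∏ i, pp i) * C with hK0
  have hK0t : K0 ≠ ⊤ := ENNReal.mul_ne_top ENNReal.ofReal_ne_top ENNReal.coe_ne_top
  refine ⟨K0.toNNReal ^ p, ?_⟩
  have hC'coe : ((K0.toNNReal ^ p : ℝ≥0) : ℝ≥0∞) = K0 ^ p := by
    rw [ENNReal.coe_rpow_of_nonneg _ hp0.le, ENNReal.coe_toNNReal hK0t]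
  filter_upwards [diff_weight hν, MeasureTheory.ae_all_iff.mpr (fun i => diff_weight (hw i))]
    with x hx hxs
  have hcube : ∀ k : ℕ, IsCube (ctrCube x (1/(k+1:ℝ))) :=
    fun k => isCube_ctrCube x (by positivity)
  have hineq : ∀ k : ℕ, avgw ν (ctrCube x (1/(k+1:ℝ))) ^ (1/p)
      ≤ K0 * ∏ i, avgw (w i) (ctrCube x (1/(k+1:ℝ))) ^ (1/pp i) :=
    fun k => hpart1 _ (hcube k)
  have hT1 : Filter.Tendsto (fun k : ℕ => avgw ν (ctrCube x (1/(k+1:ℝ))) ^ (1/p))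
      Filter.atTop (nhds (ν x ^ (1/p))) :=
    (ENNReal.continuous_rpow_const.tendsto _).comp hx
  have hwpos : ∀ i, w i x ≠ 0 := fun i => ((hw i).2.1 x).1.ne'
  have hwt : ∀ i, w i x ≠ ⊤ := fun i => ((hw i).2.1 x).2
  have hT2 : Filter.Tendsto
      (fun k : ℕ => K0 * ∏ i, avgw (w i) (ctrCube x (1/(k+1:ℝ))) ^ (1/pp i))
      Filter.atTop (nhds (K0 * ∏ i, w i x ^ (1/pp i))) := by
    refine ENNReal.Tendsto.const_mul ?_ (Or.inr hK0t)
    refine tendsto_prod_aux _ _ ?_ ?_ ?_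
    · intro i
      exact (ENNReal.rpow_pos (zero_lt_iff.mpr (hwpos i)) (hwt i)).ne'
    · intro i
      exact ENNReal.rpow_ne_top_of_nonneg (one_div_nonneg.mpr (hppos i).le) (hwt i)
    · intro i
      exact (ENNReal.continuous_rpow_const.tendsto _).comp (hxs i)
  have hlim : ν x ^ (1/p) ≤ K0 * ∏ i, w i x ^ (1/pp i) :=
    le_of_tendsto_of_tendsto' hT1 hT2 hineq
  calc ν x = (ν x ^ (1/p)) ^ p := by
        rw [← ENNReal.rpow_mul, one_div, inv_mul_cancel₀ hp0.ne', ENNReal.rpow_one]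
    _ ≤ (K0 * ∏ i, w i x ^ (1/pp i)) ^ p := ENNReal.rpow_le_rpow hlim hp0.le
    _ = ↑(K0.toNNReal ^ p) * ∏ i, w i x ^ (p / pp i) := by
        rw [ENNReal.mul_rpow_of_nonneg _ _ hp0.le, ← ENNReal.prod_rpow_of_nonneg hp0.le, hC'coe]
        congr 1
        refine Finset.prod_congr rfl fun i _ => ?_
        rw [← ENNReal.rpow_mul, one_div, inv_mul_eq_div]
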